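/- A 2×2 complex matrix A is unitary if and only if there exist a, b, c, z ∈ ℂ, each of modulus 1, such that A = (1/2)·[[a(1+z), a·c·(1−z)], [b(1−z), b·c·(1+z)]]. -/

import Mathlib

lemma aux_abs_one {z : ℂ} (h : z * (starRingEnd ℂ) z = 1) : ‖z‖ = 1 := by
  have h2 : Complex.normSq z = 1 := by
    have := (Complex.mul_conj z).symm.trans h
    exact_mod_cast this
  rw [Complex.norm_def, h2, Real.sqrt_one]

lemma aux_mul_conj {z : ℂ} (h : ‖z‖ = 1) : z * (starRingEnd ℂ) z = 1 := by
  rw [Complex.mul_conj]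
  norm_cast
  rw [← Complex.sq_norm, h]; norm_num

/-- A 2×2 complex matrix is unitary iff it is of the form
`(1/2)·[[a(1+z), ac(1−z)], [b(1−z), bc(1+z)]]` for unimodular `a, b, c, z`. -/
theorem u2_parametrization (A : Matrix (Fin 2) (Fin 2) ℂ) :
    A ∈ Matrix.unitaryGroup (Fin 2) ℂ ↔
      ∃ a b c z : ℂ, ‖a‖ = 1 ∧ ‖b‖ = 1 ∧ ‖c‖ = 1 ∧
        ‖z‖ = 1 ∧
        A = (1 / 2 : ℂ) • !![a * (1 + z), a * c * (1 - z);
                             b * (1 - z), b * c * (1 + z)] := by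
  constructor
  · intro h
    have h1 := Matrix.mem_unitaryGroup_iff.mp h
    have h2 := Matrix.mem_unitaryGroup_iff'.mp h
    have e1 := congrFun (congrFun h1 0) 0
    have e2 := congrFun (congrFun h2 0) 0
    have e3 := congrFun (congrFun h2 0) 1
    have e4 := congrFun (congrFun h1 1) 1
    simp [Matrix.mul_apply, Fin.sum_univ_two, Matrix.one_apply] at e1 e2 e3 e4
    obtain ⟨α, hA00⟩ : ∃ x : ℂ, x = A 0 0 := ⟨_, rfl⟩
    obtain ⟨β, hA01⟩ : ∃ x : ℂ, x = A 0 1 := ⟨_, rfl⟩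
    obtain ⟨γ, hA10⟩ : ∃ x : ℂ, x = A 1 0 := ⟨_, rfl⟩
    obtain ⟨δ, hA11⟩ : ∃ x : ℂ, x = A 1 1 := ⟨_, rfl⟩
    simp only [← hA00, ← hA01, ← hA10, ← hA11] at e1 e2 e3 e4
    have hγβ : γ * (starRingEnd ℂ) γ = β * (starRingEnd ℂ) β := by linear_combination e2 - e1
    have hδα : δ * (starRingEnd ℂ) δ = α * (starRingEnd ℂ) α := by linear_combination e4 - e1 - hγβ
    have hAeq : ∀ a b c z : ℂ,
        α = (1/2) * (a * (1 + z)) → β = (1/2) * (a * c * (1 - z)) →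
        γ = (1/2) * (b * (1 - z)) → δ = (1/2) * (b * c * (1 + z)) →
        A = (1 / 2 : ℂ) • !![a * (1 + z), a * c * (1 - z);
                             b * (1 - z), b * c * (1 + z)] := by
      intro a b c z p q u v
      ext i j
      fin_cases i <;> fin_cases j <;>
        simp only [Matrix.smul_apply, Matrix.cons_val', Matrix.cons_val_zero, Matrix.cons_val_one,
          Matrix.head_cons, Matrix.head_fin_const, Matrix.empty_val', Matrix.cons_val_fin_one,
          smul_eq_mul, Fin.isValue, Fin.zero_eta, Fin.mk_one]
      · rw [← hA00, p]; simp
      · rw [← hA01, q]; simp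
      · rw [← hA10, u]; simp
      · rw [← hA11, v]; simp
    by_cases hβ : β = 0
    · have hγ : γ = 0 := by
        have : Complex.normSq γ = 0 := by
          have := hγβ; rw [hβ, Complex.mul_conj] at this
          exact_mod_cast by simpa using this
        exact Complex.normSq_eq_zero.mp this
      refine ⟨α, δ, 1, 1, ?_, ?_, by simp, by simp, ?_⟩
      · refine aux_abs_one ?_
        rw [hβ] at e1; simpa using e1
      · refine aux_abs_one ?_
        rw [hγ] at e4; simpa using e4
      · exact hAeq α δ 1 1 (by ring) (by rw [hβ]; ring) (by rw [hγ]; ring) (by ring)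
    · by_cases hα : α = 0
      · have hδ : δ = 0 := by
          have : Complex.normSq δ = 0 := by
            have := hδα; rw [hα, Complex.mul_conj] at this
            exact_mod_cast by simpa using this
          exact Complex.normSq_eq_zero.mp this
        refine ⟨1, γ, β, -1, by simp, ?_, ?_, by simp, ?_⟩
        · refine aux_abs_one ?_
          rw [hα] at e1; simp at e1; exact hγβ.trans e1
        · refine aux_abs_one ?_
          rw [hα] at e1; simpa using e1
        · exact hAeq 1 γ β (-1) (by rw [hα]; ring) (by ring) (by ring) (by rw [hδ]; ring)
      · obtain ⟨r, hr⟩ : ∃ x : ℝ, x = ‖α‖ := ⟨_, rfl⟩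
        obtain ⟨s, hs⟩ : ∃ x : ℝ, x = ‖β‖ := ⟨_, rfl⟩
        have hr0 : r ≠ 0 := by rw [hr]; simpa using hα
        have hs0 : s ≠ 0 := by rw [hs]; simpa using hβ
        have hrc : (r : ℂ) ≠ 0 := by exact_mod_cast hr0
        have hsc : (s : ℂ) ≠ 0 := by exact_mod_cast hs0
        have hr2 : ((r : ℂ))^2 = α * (starRingEnd ℂ) α := by
          rw [← Complex.ofReal_pow, hr, Complex.sq_norm, Complex.mul_conj]
        have hs2 : ((s : ℂ))^2 = β * (starRingEnd ℂ) β := by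
          rw [← Complex.ofReal_pow, hs, Complex.sq_norm, Complex.mul_conj]
        have hrs1 : ((r : ℂ))^2 + ((s : ℂ))^2 = 1 := by rw [hr2, hs2]; exact e1
        obtain ⟨w, hw⟩ : ∃ x : ℂ, x = (r : ℂ) + (s : ℂ) * Complex.I := ⟨_, rfl⟩
        have hwc : (starRingEnd ℂ) w = (r : ℂ) - (s : ℂ) * Complex.I := by
          rw [hw]; simp [Complex.conj_ofReal]; ring
        have hw1 : w * (starRingEnd ℂ) w = 1 := by
          rw [hwc, hw]
          linear_combination hrs1 - (s:ℂ)^2 * Complex.I_sq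
        have habsw : ‖w‖ = 1 := aux_abs_one hw1
        have hwne : w ≠ 0 := by
          intro h0; rw [h0] at habsw; simp at habsw
        have hz1 : 1 + w^2 = 2 * r * w := by
          rw [hw]; linear_combination (s:ℂ)^2 * Complex.I_sq - hrs1
        have hz2 : 1 - w^2 = -2 * Complex.I * s * w := by
          rw [hw]; linear_combination (s:ℂ)^2 * Complex.I_sq - hrs1
        have har : ‖((r:ℂ))‖ = r := by
          rw [Complex.norm_real, Real.norm_eq_abs]; exact abs_of_nonneg (by rw [hr]; exact norm_nonneg _)
        have has : ‖((s:ℂ))‖ = s := by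
          rw [Complex.norm_real, Real.norm_eq_abs]; exact abs_of_nonneg (by rw [hs]; exact norm_nonneg _)
        refine ⟨α / ((r:ℂ) * w), Complex.I * γ / ((s:ℂ) * w), Complex.I * β * (r:ℂ) / ((s:ℂ) * α), w^2,
          ?_, ?_, ?_, ?_, ?_⟩
        · rw [norm_div, norm_mul, har, habsw, ← hr]
          field_simp
        · have hγabs : ‖γ‖ = s := by
            have h5 : Complex.normSq γ = Complex.normSq β := by
              have := hγβ; rw [Complex.mul_conj, Complex.mul_conj] at this; exact_mod_cast this
            rw [Complex.norm_def, h5, ← Complex.norm_def, hs]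
          rw [norm_div, norm_mul, norm_mul, has, habsw, Complex.norm_I, hγabs]
          field_simp
        · rw [norm_div, norm_mul, norm_mul, norm_mul, har, has, Complex.norm_I, ← hr, ← hs]
          field_simp
        · rw [norm_pow, habsw]; norm_num
        · refine hAeq _ _ _ _ ?_ ?_ ?_ ?_
          · rw [hz1]; field_simp
          · rw [hz2]; field_simp
            linear_combination Complex.I_sq
          · rw [hz2]; field_simp
            linear_combination γ * Complex.I_sq
          · rw [hz1]; field_simp
            linear_combination (-γ*β*(r:ℂ)^2) * Complex.I_sq + δ*α*hs2 +
              γ*β*hr2 + α*γ*e3 - δ*α*hγβ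
  · rintro ⟨a, b, c, z, ha, hb, hc, hz, rfl⟩
    rw [Matrix.mem_unitaryGroup_iff']
    have ha' := aux_mul_conj ha
    have hb' := aux_mul_conj hb
    have hc' := aux_mul_conj hc
    have hz' := aux_mul_conj hz
    ext i j
    fin_cases i <;> fin_cases j <;>
      simp [Matrix.mul_apply, Fin.sum_univ_two, Matrix.one_apply, Matrix.smul_apply,
        map_mul, map_add, map_sub, map_one, map_ofNat]
    · linear_combination (1/4*(1+z)*(1+(starRingEnd ℂ) z)) * ha' +
        (1/4*(1-z)*(1-(starRingEnd ℂ) z)) * hb' + (1/2 : ℂ) * hz'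
    · linear_combination (c/4*(1-z)*(1+(starRingEnd ℂ) z)) * ha' +
        (c/4*(1+z)*(1-(starRingEnd ℂ) z)) * hb' - (c/2) * hz'
    · linear_combination ((starRingEnd ℂ) c/4*(1+z)*(1-(starRingEnd ℂ) z)) * ha' +
        ((starRingEnd ℂ) c/4*(1-z)*(1+(starRingEnd ℂ) z)) * hb' - ((starRingEnd ℂ) c/2) * hz'
    · linear_combination (c*(starRingEnd ℂ) c/4*(1-z)*(1-(starRingEnd ℂ) z)) * ha' +
        (c*(starRingEnd ℂ) c/4*(1+z)*(1+(starRingEnd ℂ) z)) * hb' +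
        (c*(starRingEnd ℂ) c/2) * hz' + hc'
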